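/- arXiv:1212.2314 — 4 statements merged into one kernel-verified Lean document; each statement's English description precedes it below -/
import Mathlib

section
/- The containment relation on hypergraphs is a partial order: it is reflexive, antisymmetric, and transitive. (Consequently, proper containment is a strict partial order on hypergraphs.) -/
/-- A hypergraph, identified (as in the paper) with its finite set of
finite hyperedges; its nodes are the vertices occurring in some hyperedge. -/
structure HGraph (α : Type*) where
  edges : Finset (Finset α)

namespace HGraph

variable {α : Type*}

/-- The set of nodes of a hypergraph. -/
def nodes (H : HGraph α) : Set α := {x | ∃ h ∈ H.edges, x ∈ h}

/-- `H1 ≤ H2`: every hyperedge of `H1` is contained in some hyperedge of `H2`. -/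
def HLe (H1 H2 : HGraph α) : Prop := ∀ h1 ∈ H1.edges, ∃ h2 ∈ H2.edges, h1 ⊆ h2

/-- `H` is contained in `H'`. -/
def Contained (H H' : HGraph α) : Prop :=
  ∀ h ∈ H.edges, h ∉ H'.edges → ∃ h' ∈ H'.edges, h' ∉ H.edges ∧ h ⊆ h'

/-- `H` is properly contained in `H'`. -/
def ProperlyContained (H H' : HGraph α) : Prop := H.Contained H' ∧ H ≠ H'

/-- A hypergraph is reduced if no hyperedge is a proper subset of another one. -/
def Reduced (H : HGraph α) : Prop := ∀ h ∈ H.edges, ∀ h' ∈ H.edges, ¬ h ⊂ h'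

end HGraph

/-- The type of hyperedges of `H`. -/
abbrev Hyperedge {α : Type*} (H : HGraph α) := {h : Finset α // h ∈ H.edges}

/-- A join tree for a hypergraph `H`: a tree whose vertices are the hyperedges of `H`
such that, for every node `X`, the hyperedges containing `X` induce a connected subtree. -/
structure JoinTree {α : Type*} (H : HGraph α) where
  T : SimpleGraph (Hyperedge H)
  isTree : T.IsTree
  node_connected : ∀ X : α, (T.induce {h : Hyperedge H | X ∈ h.1}).Preconnected

/-- A hypergraph is acyclic iff it has a join tree. -/
def HGraph.Acyclic {α : Type*} (H : HGraph α) : Prop := Nonempty (JoinTree H)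

/-- `Ha` is a tree projection of `H1` w.r.t. `H2`. -/
def IsTreeProjection {α : Type*} (H1 H2 Ha : HGraph α) : Prop :=
  Ha.Acyclic ∧ H1.HLe Ha ∧ Ha.HLe H2

/-- `Ha` is a minimal tree projection of `H1` w.r.t. `H2`. -/
def IsMinimalTreeProjection {α : Type*} (H1 H2 Ha : HGraph α) : Prop :=
  IsTreeProjection H1 H2 Ha ∧
  ∀ Ha' : HGraph α, IsTreeProjection H1 H2 Ha' → ¬ Ha'.ProperlyContained Ha

namespace HGraph

variable {α : Type*}

/-- `X` is `[V]`-adjacent to `Y`: some hyperedge contains both outside of `V`. -/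
def Adj (H : HGraph α) (V : Set α) (X Y : α) : Prop :=
  ∃ h ∈ H.edges, X ∈ h ∧ Y ∈ h ∧ X ∉ V ∧ Y ∉ V

/-- There is a `[V]`-path from `X` to `Y`. -/
def VPath (H : HGraph α) (V : Set α) : α → α → Prop :=
  Relation.ReflTransGen (H.Adj V)

/-- The set `W` is `[V]`-connected. -/
def VConnected (H : HGraph α) (V W : Set α) : Prop :=
  ∀ X ∈ W, ∀ Y ∈ W, H.VPath V X Y

/-- `C` is a `[V]`-component of `H`: a maximal `[V]`-connected nonempty subset
of `nodes(H) \ V`. -/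
def IsComponent (H : HGraph α) (V C : Set α) : Prop :=
  C.Nonempty ∧ C ⊆ H.nodes \ V ∧ H.VConnected V C ∧
  ∀ C' : Set α, C ⊆ C' → C' ⊆ H.nodes \ V → H.VConnected V C' → C' = C

/-- The frontier `Fr(C,H)`: the union of all hyperedges meeting `C`. -/
def Fr (H : HGraph α) (C : Set α) : Set α :=
  {x | ∃ h ∈ H.edges, x ∈ h ∧ ∃ y ∈ C, y ∈ h}

/-- The border `∂(C,H) = Fr(C,H) \ C`. -/
def border (H : HGraph α) (C : Set α) : Set α := H.Fr C \ C

/-- `X` `[V]`-touches the set `W`: `X` is `[∅]`-adjacent to some node `Z` from which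
there is a `[V]`-path to some node of `W`. -/
def Touches (H : HGraph α) (V : Set α) (X : α) (W : Set α) : Prop :=
  ∃ Z : α, H.Adj ∅ X Z ∧ ∃ Y ∈ W, H.VPath V Z Y

end HGraph

namespace JoinTree

variable {α : Type*} {H : HGraph α}

/-- The vertices of the subtree rooted at `h_s` when the join tree is rooted at
(the side of) `h_r`, for adjacent vertices `h_r`, `h_s`. -/
def subtreeVerts (JT : JoinTree H) (h_r h_s : Hyperedge H) : Set (Hyperedge H) :=
  {v | JT.T.dist v h_s < JT.T.dist v h_r}

/-- The nodes occurring in the vertices of the subtree rooted at `h_s` (w.r.t. `h_r`). -/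
def subtreeNodes (JT : JoinTree H) (h_r h_s : Hyperedge H) : Set α :=
  {x | ∃ v ∈ JT.subtreeVerts h_r h_s, x ∈ v.1}

/-- `h_s` is a child of `h_r` in the join tree rooted at `root`. -/
def IsChild (JT : JoinTree H) (root h_r h_s : Hyperedge H) : Prop :=
  JT.T.Adj h_r h_s ∧ JT.T.dist root h_r < JT.T.dist root h_s

end JoinTree

/-- The sub-hypergraph of `H1` induced by the node set `N` is `[∅]`-connected. -/
def InducedConn {α : Type*} (H1 : HGraph α) (N : Set α) : Prop :=
  ∀ X ∈ N, ∀ Y ∈ N,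
    Relation.ReflTransGen
      (fun a b => a ∈ N ∧ b ∈ N ∧ ∃ h ∈ H1.edges, a ∈ h ∧ b ∈ h) X Y

/-- A join tree of `Ha` is `H1`-connected. -/
def JoinTree.IsConnectedFor {α : Type*} {Ha : HGraph α} (JT : JoinTree Ha)
    (H1 : HGraph α) : Prop :=
  ∀ h_r h_s : Hyperedge Ha, JT.T.Adj h_r h_s → InducedConn H1 (JT.subtreeNodes h_r h_s)

/-- `C` is the component `C⊤(h)` associated with vertex `h` of the join tree rooted at
`root`: conventionally `nodes(H1)` for the root, and otherwise the unique
`[h_p]`-component of `H1` (for `h_p` the parent of `h`) determined by the subtree at `h`. -/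
def CtopAt {α : Type*} (H1 : HGraph α) {Ha : HGraph α} (JT : JoinTree Ha)
    (root h : Hyperedge Ha) (C : Set α) : Prop :=
  (h = root ∧ C = H1.nodes) ∨
  ∃ h_p : Hyperedge Ha, JT.IsChild root h_p h ∧ H1.IsComponent (h_p.1 : Set α) C ∧
    JT.subtreeNodes h_p h = C ∪ ((h.1 : Set α) ∩ (h_p.1 : Set α))

/-- The join tree `JT` of `Ha`, rooted at `root`, is an `H1`-component tree. -/
def JoinTree.IsComponentTreeFor {α : Type*} {Ha : HGraph α} (JT : JoinTree Ha)
    (H1 : HGraph α) (root : Hyperedge Ha) : Prop :=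
  (∀ h_r h_s : Hyperedge Ha, JT.IsChild root h_r h_s →
    (∃! C : Set α, H1.IsComponent (h_r.1 : Set α) C ∧
      JT.subtreeNodes h_r h_s = C ∪ ((h_s.1 : Set α) ∩ (h_r.1 : Set α))) ∧
    (∀ C : Set α, H1.IsComponent (h_r.1 : Set α) C →
      JT.subtreeNodes h_r h_s = C ∪ ((h_s.1 : Set α) ∩ (h_r.1 : Set α)) →
      ((h_s.1 : Set α) ∩ C).Nonempty ∧ (h_s.1 : Set α) ⊆ H1.Fr C)) ∧
  (∀ h_r : Hyperedge Ha, ∀ Ctop : Set α, CtopAt H1 JT root h_r Ctop →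
    ∀ C_r : Set α, H1.IsComponent (h_r.1 : Set α) C_r → C_r ⊆ Ctop →
    ∃! h_s : Hyperedge Ha, JT.IsChild root h_r h_s ∧
      JT.subtreeNodes h_r h_s = C_r ∪ ((h_s.1 : Set α) ∩ (h_r.1 : Set α)))

/-! ### The Robber and Captain game -/

/-- A position for the Captain: a set of nodes included in some hyperedge of `H2`. -/
def IsPosition {α : Type*} (H2 : HGraph α) (M : Set α) : Prop :=
  ∃ h2 ∈ H2.edges, M ⊆ (h2 : Set α)

/-- A configuration of the game `R&C(H1,H2)`. -/
def IsConfig {α : Type*} (H1 H2 : HGraph α) (M C : Set α) : Prop :=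
  IsPosition H2 M ∧ (H1.IsComponent M C ∨ C = ∅ ∨ (M = ∅ ∧ C = H1.nodes))

/-- `C_j` is an `[(M_i,C_i),M_j]`-escape component: an `[M_j]`-component of `H1`
such that `C_i ∪ C_j` is `[M_i ∩ M_j]`-connected. -/
def EscapeComp {α : Type*} (H1 : HGraph α) (M_i C_i M_j C_j : Set α) : Prop :=
  H1.IsComponent M_j C_j ∧ H1.VConnected (M_i ∩ M_j) (C_i ∪ C_j)

/-- The escape door `ED((M_i,C),M') = ∂(C,H1) \ M'` (it only depends on `C` and `M'`). -/
def escapeDoor {α : Type*} (H1 : HGraph α) (C M' : Set α) : Set α :=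
  H1.border C \ M'

/-- `σ` is a strategy for the Captain in `R&C(H1,H2)`. -/
def IsStrategy {α : Type*} (H1 H2 : HGraph α) (σ : Set α → Set α → Set α) : Prop :=
  ∀ M C : Set α, IsConfig H1 H2 M C → C ≠ ∅ →
    IsPosition H2 (σ M C) ∧ σ M C ⊆ H1.Fr C

/-- One step of the game played according to `σ`: from configuration `p` the Captain
moves to `σ p.1 p.2`, and the Robber either selects an escape component or is captured. -/
def GameStep {α : Type*} (H1 : HGraph α) (σ : Set α → Set α → Set α)
    (p q : Set α × Set α) : Prop :=
  p.2 ≠ ∅ ∧ q.1 = σ p.1 p.2 ∧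
    (EscapeComp H1 p.1 p.2 q.1 q.2 ∨
      ((∀ C : Set α, ¬ EscapeComp H1 p.1 p.2 q.1 C) ∧ q.2 = ∅))

/-- `p` is a vertex of the game tree `T(σ)` (reachable from the root `(∅, nodes(H1))`). -/
def InGameTree {α : Type*} (H1 : HGraph α) (σ : Set α → Set α → Set α)
    (p : Set α × Set α) : Prop :=
  Relation.ReflTransGen (GameStep H1 σ) (∅, H1.nodes) p

/-- `σ` is winning: the game tree `T(σ)` is finite, i.e., there is no infinite play. -/
def Winning {α : Type*} (H1 : HGraph α) (σ : Set α → Set α → Set α) : Prop :=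
  ¬ ∃ f : ℕ → Set α × Set α, f 0 = (∅, H1.nodes) ∧ ∀ n, GameStep H1 σ (f n) (f (n + 1))

/-- `M_j` is a monotone move in `(M_i, C_i)`. -/
def MonotoneMove {α : Type*} (H1 : HGraph α) (M_i C_i M_j : Set α) : Prop :=
  ∀ C : Set α, EscapeComp H1 M_i C_i M_j C → C ⊆ C_i

/-- `σ` is a monotone strategy. -/
def MonotoneStrategy {α : Type*} (H1 : HGraph α) (σ : Set α → Set α → Set α) : Prop :=
  ∀ p q : Set α × Set α, InGameTree H1 σ p → GameStep H1 σ p q →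
    MonotoneMove H1 p.1 p.2 q.1


lemma hypergraph_eq_of_edges {α : Type*} {H H' : HGraph α} (h : H.edges = H'.edges) :
    H = H' := by
  cases H; cases H'; simpa using h

lemma contained_refl' {α : Type*} (H : HGraph α) : H.Contained H := by
  intro h hmem hnot; exact absurd hmem hnot

lemma contained_antisymm' {α : Type*} {H H' : HGraph α}
    (h1 : H.Contained H') (h2 : H'.Contained H) : H = H' := by
  classical
  apply hypergraph_eq_of_edges
  by_contra hne
  have hS : ((H.edges \ H'.edges) ∪ (H'.edges \ H.edges)).Nonempty := by
    rcases Finset.not_subset.mp (fun hsub => hne (Finset.Subset.antisymm hsub (by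
      by_contra hsub'
      rcases Finset.not_subset.mp hsub' with ⟨x, hx, hx'⟩
      rcases h2 x hx hx' with ⟨y, hy, hy', _⟩
      exact hy' (hsub hy)))) with ⟨x, hx, hx'⟩
    · exact ⟨x, Finset.mem_union_left _ (Finset.mem_sdiff.mpr ⟨hx, hx'⟩)⟩
  obtain ⟨b, hb, hmax⟩ := ((H.edges \ H'.edges) ∪ (H'.edges \ H.edges)).exists_max_image
    Finset.card hS
  rcases Finset.mem_union.mp hb with hb' | hb'
  · rcases Finset.mem_sdiff.mp hb' with ⟨hbH, hbH'⟩
    rcases h1 b hbH hbH' with ⟨c, hcH', hcH, hbc⟩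
    have : b.card < c.card := Finset.card_lt_card (Finset.ssubset_iff_subset_ne.mpr
      ⟨hbc, fun h => hcH (h ▸ hbH)⟩)
    have := hmax c (Finset.mem_union_right _ (Finset.mem_sdiff.mpr ⟨hcH', hcH⟩))
    omega
  · rcases Finset.mem_sdiff.mp hb' with ⟨hbH', hbH⟩
    rcases h2 b hbH' hbH with ⟨c, hcH, hcH', hbc⟩
    have : b.card < c.card := Finset.card_lt_card (Finset.ssubset_iff_subset_ne.mpr
      ⟨hbc, fun h => hcH' (h ▸ hbH')⟩)
    have := hmax c (Finset.mem_union_left _ (Finset.mem_sdiff.mpr ⟨hcH, hcH'⟩))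
    omega

lemma contained_key {α : Type*} {H H' H'' : HGraph α}
    (h12 : H.Contained H') (h23 : H'.Contained H'') :
    ∀ n : ℕ, ∀ h : Finset α, h ∈ H'.edges → h ∉ H.edges → h ∉ H''.edges →
      (max (H.edges.sup Finset.card) (max (H'.edges.sup Finset.card) (H''.edges.sup Finset.card))) - h.card ≤ n →
      ∃ g ∈ H''.edges, g ∉ H.edges ∧ h ⊆ g := by
  set B := max (H.edges.sup Finset.card) (max (H'.edges.sup Finset.card) (H''.edges.sup Finset.card)) with hB
  classical
  intro n
  induction n with
  | zero =>
    intro h hH' hH hH'' hcard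
    rcases h23 h hH' hH'' with ⟨g, hgH'', hgH', hhg⟩
    have hlt : h.card < g.card := Finset.card_lt_card (Finset.ssubset_iff_subset_ne.mpr
      ⟨hhg, fun he => hgH' (he ▸ hH')⟩)
    have hgB : g.card ≤ B :=
      le_trans (Finset.le_sup hgH'') (le_max_of_le_right (le_max_right _ _))
    omega
  | succ n ih =>
    intro h hH' hH hH'' hcard
    rcases h23 h hH' hH'' with ⟨g, hgH'', hgH', hhg⟩
    have hlt : h.card < g.card := Finset.card_lt_card (Finset.ssubset_iff_subset_ne.mpr
      ⟨hhg, fun he => hgH' (he ▸ hH')⟩)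
    by_cases hgH : g ∈ H.edges
    · rcases h12 g hgH hgH' with ⟨k, hkH', hkH, hgk⟩
      by_cases hkH'' : k ∈ H''.edges
      · exact ⟨k, hkH'', hkH, hhg.trans hgk⟩
      · have hkB : k.card ≤ B :=
          le_trans (Finset.le_sup hkH') (le_max_of_le_right (le_max_left _ _))
        have hgk' : g.card ≤ k.card := Finset.card_le_card hgk
        rcases ih k hkH' hkH hkH'' (by omega) with ⟨m, hm1, hm2, hm3⟩
        exact ⟨m, hm1, hm2, (hhg.trans hgk).trans hm3⟩
    · exact ⟨g, hgH'', hgH, hhg⟩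

lemma contained_trans' {α : Type*} {H H' H'' : HGraph α}
    (h12 : H.Contained H') (h23 : H'.Contained H'') : H.Contained H'' := by
  intro h hH hH''
  have key := contained_key h12 h23 (max (H.edges.sup Finset.card) (max (H'.edges.sup Finset.card) (H''.edges.sup Finset.card)))
  by_cases hH' : h ∈ H'.edges
  · rcases h23 h hH' hH'' with ⟨g, hgH'', hgH', hhg⟩
    by_cases hgH : g ∈ H.edges
    · rcases h12 g hgH hgH' with ⟨k, hkH', hkH, hgk⟩
      by_cases hkH'' : k ∈ H''.edges
      · exact ⟨k, hkH'', hkH, hhg.trans hgk⟩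
      · rcases key k hkH' hkH hkH'' (by omega) with ⟨m, hm1, hm2, hm3⟩
        exact ⟨m, hm1, hm2, (hhg.trans hgk).trans hm3⟩
    · exact ⟨g, hgH'', hgH, hhg⟩
  · rcases h12 h hH hH' with ⟨g, hgH', hgH, hhg⟩
    by_cases hgH'' : g ∈ H''.edges
    · exact ⟨g, hgH'', hgH, hhg⟩
    · rcases key g hgH' hgH hgH'' (by omega) with ⟨m, hm1, hm2, hm3⟩
      exact ⟨m, hm1, hm2, hhg.trans hm3⟩

theorem containment_is_partial_order (α : Type*) :
    (∀ H : HGraph α, H.Contained H) ∧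
    (∀ H H' : HGraph α, H.Contained H' → H'.Contained H → H = H') ∧
    (∀ H H' H'' : HGraph α, H.Contained H' → H'.Contained H'' → H.Contained H'') ∧
    (∀ H : HGraph α, ¬ H.ProperlyContained H) ∧
    (∀ H H' H'' : HGraph α,
      H.ProperlyContained H' → H'.ProperlyContained H'' → H.ProperlyContained H'') := by
  refine ⟨contained_refl', fun _ _ => contained_antisymm', fun _ _ _ => contained_trans',
    fun H h => h.2 rfl, ?_⟩
  intro H H' H'' ⟨h1, hne1⟩ ⟨h2, hne2⟩
  refine ⟨contained_trans' h1 h2, fun he => ?_⟩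
  exact hne1 (contained_antisymm' h1 (he ▸ h2))
end

section
/- Let H1 and Ha be two hypergraphs with the same set of nodes such that H1 ≤ Ha. Then, for each hyperedge h ∈ edges(Ha) and each [h]-component Ca of Ha, there are [h]-components C1^1, ..., C1^n of H1 such that Ca is the union of C1^1, ..., C1^n. -/
lemma HGraph.adj_symm {α : Type*} (H : HGraph α) (V : Set α) :
    Symmetric (H.Adj V) := by
  rintro X Y ⟨h, hh, hX, hY, hXV, hYV⟩
  exact ⟨h, hh, hY, hX, hYV, hXV⟩

lemma HGraph.vpath_symm {α : Type*} (H : HGraph α) (V : Set α) {X Y : α}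
    (h : H.VPath V X Y) : H.VPath V Y X :=
  haveI : Std.Symm (H.Adj V) := ⟨fun _ _ hab => H.adj_symm V hab⟩
  Std.Symm.symm (r := Relation.ReflTransGen (H.Adj V)) _ _ h

lemma HGraph.vpath_mono {α : Type*} {H1 Ha : HGraph α} (hle : H1.HLe Ha)
    (V : Set α) {X Y : α} (h : H1.VPath V X Y) : Ha.VPath V X Y := by
  refine Relation.ReflTransGen.mono ?_ X Y h
  rintro a b ⟨e, he, ha, hb, haV, hbV⟩
  obtain ⟨e', he', hsub⟩ := hle e he
  exact ⟨e', he', hsub ha, hsub hb, haV, hbV⟩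

theorem component_is_union {α : Type*} (H1 Ha : HGraph α)
    (hnodes : H1.nodes = Ha.nodes) (hle : H1.HLe Ha) :
    ∀ h ∈ Ha.edges, ∀ Ca : Set α, Ha.IsComponent (h : Set α) Ca →
      ∃ S : Set (Set α), (∀ C ∈ S, H1.IsComponent (h : Set α) C) ∧ Ca = ⋃₀ S := by
  intro h hh Ca hCa
  obtain ⟨hne, hsub, hconn, hmax⟩ := hCa
  -- component of H1 containing x
  set Cof : α → Set α := fun x => {y | H1.VPath (h : Set α) x y} with hCof
  -- membership facts
  have hmemC : ∀ x ∈ Ca, ∀ y ∈ Cof x, y ∈ H1.nodes \ (h : Set α) := by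
    intro x hx y hy
    rcases (Relation.ReflTransGen.cases_tail hy) with rfl | ⟨c, _, ⟨e, he, _, hbe, _, hbh⟩⟩
    · have := hsub hx
      rwa [hnodes]
    · exact ⟨⟨e, he, hbe⟩, hbh⟩
  have hself : ∀ x, x ∈ Cof x := fun x => Relation.ReflTransGen.refl
  -- each Cof x is an H1-component
  have hcomp : ∀ x ∈ Ca, H1.IsComponent (h : Set α) (Cof x) := by
    intro x hx
    refine ⟨⟨x, hself x⟩, fun y hy => hmemC x hx y hy, ?_, ?_⟩
    · intro y hy z hz
      exact (H1.vpath_symm _ hy).trans hz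
    · intro C' hCC' hC'sub hC'conn
      apply Set.Subset.antisymm _ hCC'
      intro y hy
      exact hC'conn x (hCC' (hself x)) y hy
  -- each Cof x is contained in Ca
  have hinCa : ∀ x ∈ Ca, Cof x ⊆ Ca := by
    intro x hx
    have hD : Ca ∪ Cof x = Ca := by
      refine hmax _ Set.subset_union_left ?_ ?_
      · rintro y (hy | hy)
        · exact hsub hy
        · have := hmemC x hx y hy
          rwa [hnodes] at this
      · have key : ∀ y ∈ Ca ∪ Cof x, Ha.VPath (h : Set α) x y := by
          rintro y (hy | hy)
          · exact hconn x hx y hy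
          · exact HGraph.vpath_mono hle _ hy
        intro y hy z hz
        exact (Ha.vpath_symm _ (key y hy)).trans (key z hz)
    intro y hy
    rw [← hD]; exact Or.inr hy
  refine ⟨{C | ∃ x ∈ Ca, C = Cof x}, ?_, ?_⟩
  · rintro C ⟨x, hx, rfl⟩
    exact hcomp x hx
  · apply Set.Subset.antisymm
    · intro x hx
      exact ⟨Cof x, ⟨x, hx, rfl⟩, hself x⟩
    · rintro y ⟨C, ⟨x, hx, rfl⟩, hy⟩
      exact hinCa x hx hy
end

section
/- Let H1 be a hypergraph, let M_i and M_{i+1} be sets of nodes of H1, let C_i be an [M_i]-component of H1, and let v_i = (M_i,C_i). Then ED(v_i,M_{i+1}) = ∅ if, and only if, every [v_i,M_{i+1}]-escape component C_{i+1} satisfies C_{i+1} ⊆ C_i. -/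
section Aux

variable {α : Type*} {H1 : HGraph α}

private lemma adj_symm' (V : Set α) : Symmetric (H1.Adj V) := by
  rintro a b ⟨h, hh, ha, hb, haV, hbV⟩
  exact ⟨h, hh, hb, ha, hbV, haV⟩

private lemma vpath_symm {V : Set α} {a b : α} (h : H1.VPath V a b) :
    H1.VPath V b a :=
  by
    haveI : Std.Symm (H1.Adj V) := ⟨fun a b h => adj_symm' V h⟩
    exact Std.Symm.symm (r := Relation.ReflTransGen (H1.Adj V)) a b h

private lemma adj_mono {V W : Set α} (hWV : W ⊆ V) {a b : α}
    (h : H1.Adj V a b) : H1.Adj W a b := by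
  obtain ⟨e, he, ha, hb, haV, hbV⟩ := h
  exact ⟨e, he, ha, hb, fun hx => haV (hWV hx), fun hx => hbV (hWV hx)⟩

private lemma vpath_mono {V W : Set α} (hWV : W ⊆ V) {a b : α}
    (h : H1.VPath V a b) : H1.VPath W a b :=
  Relation.ReflTransGen.mono (p := H1.Adj W) (fun _ _ => adj_mono hWV) a b h

/-- On a `[V]`-path from outside `C` into `C`, there is a transition edge. -/
private lemma transition {V C : Set α} {x y : α} (hp : H1.VPath V x y)
    (hy : y ∈ C) : x ∉ C → ∃ a b, H1.Adj V a b ∧ a ∉ C ∧ b ∈ C := by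
  induction hp using Relation.ReflTransGen.head_induction_on with
  | refl => intro hx; exact absurd hy hx
  | @head a c hac hcy ih =>
    intro hx
    by_cases hc : c ∈ C
    · exact ⟨_, _, hac, hx, hc⟩
    · exact ih hc

/-- A node outside `M` adjacent to a component is in the component. -/
private lemma mem_of_adj_comp {M C : Set α} (hC : H1.IsComponent M C)
    {a b : α} (haN : a ∈ H1.nodes) (haM : a ∉ M) (hb : b ∈ C)
    (hadj : H1.Adj M a b) : a ∈ C := by
  have hCa : insert a C = C := by
    refine hC.2.2.2 (insert a C) (Set.subset_insert _ _) ?_ ?_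
    · rintro z (rfl | hz)
      · exact ⟨haN, haM⟩
      · exact hC.2.1 hz
    · rintro X (rfl | hX) Y (rfl | hY)
      · exact Relation.ReflTransGen.refl
      · exact Relation.ReflTransGen.head hadj (hC.2.2.1 b hb Y hY)
      · exact vpath_symm (Relation.ReflTransGen.head hadj (hC.2.2.1 b hb X hX))
      · exact hC.2.2.1 X hX Y hY
  rw [← hCa]; exact Set.mem_insert a C

end Aux

theorem escape_door_empty_iff {α : Type*} (H1 : HGraph α)
    (M_i M_j C_i : Set α) (hMi : M_i ⊆ H1.nodes) (hMj : M_j ⊆ H1.nodes)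
    (hC : H1.IsComponent M_i C_i) :
    escapeDoor H1 C_i M_j = ∅ ↔
      ∀ C_j : Set α, EscapeComp H1 M_i C_i M_j C_j → C_j ⊆ C_i := by
  constructor
  · -- ED = ∅ → every escape component is contained in C_i
    intro hED C_j hEC x hx
    by_contra hxC
    obtain ⟨y, hy⟩ := hC.1
    have hpath : H1.VPath (M_i ∩ M_j) x y :=
      hEC.2 x (Or.inr hx) y (Or.inl hy)
    obtain ⟨a, b, hab, haC, hbC⟩ := transition hpath hy hxC
    obtain ⟨h, hh, hah, hbh, haV, hbV⟩ := hab
    have haN : a ∈ H1.nodes := ⟨h, hh, hah⟩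
    by_cases haMi : a ∈ M_i
    · -- a ∈ M_i, so a ∉ M_j; but a is in the border of C_i, contradicting ED = ∅
      have haMj : a ∉ M_j := fun hj => haV ⟨haMi, hj⟩
      have : a ∈ escapeDoor H1 C_i M_j :=
        ⟨⟨⟨h, hh, hah, b, hbC, hbh⟩, haC⟩, haMj⟩
      rw [hED] at this
      exact this
    · -- a ∉ M_i, so by maximality a ∈ C_i, contradiction
      have hbMi : b ∉ M_i := (hC.2.1 hbC).2
      exact haC (mem_of_adj_comp hC haN haMi hbC ⟨h, hh, hah, hbh, haMi, hbMi⟩)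
  · -- converse
    intro hmono
    by_contra hne
    obtain ⟨x, hx⟩ := Set.nonempty_iff_ne_empty.mpr hne
    obtain ⟨⟨⟨h, hh, hxh, y, hyC, hyh⟩, hxC⟩, hxMj⟩ := hx
    have hxN : x ∈ H1.nodes := ⟨h, hh, hxh⟩
    -- the [M_j]-component of x
    set D : Set α := {z | H1.VPath M_j x z} with hD
    have hxD : x ∈ D := Relation.ReflTransGen.refl
    have hDsub : D ⊆ H1.nodes \ M_j := by
      intro z hz
      induction hz with
      | refl => exact ⟨hxN, hxMj⟩
      | tail _ hadj _ =>
        obtain ⟨e, he, _, hb, _, hbV⟩ := hadj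
        exact ⟨⟨e, he, hb⟩, hbV⟩
    have hDconn : H1.VConnected M_j D := fun X hX Y hY =>
      Relation.ReflTransGen.trans (vpath_symm hX) hY
    have hDcomp : H1.IsComponent M_j D := by
      refine ⟨⟨x, hxD⟩, hDsub, hDconn, fun C' hDC' hC'sub hC'conn => ?_⟩
      apply Set.Subset.antisymm
      · intro z hz
        exact hC'conn x (hDC' hxD) z hz
      · exact hDC'
    -- D is an escape component
    have hadjxy : H1.Adj (M_i ∩ M_j) x y :=
      ⟨h, hh, hxh, hyh, fun hm => hxMj hm.2, fun hm => (hC.2.1 hyC).2 hm.1⟩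
    have hEC : EscapeComp H1 M_i C_i M_j D := by
      refine ⟨hDcomp, fun X hX Y hY => ?_⟩
      have hCi : ∀ a ∈ C_i, ∀ b ∈ C_i, H1.VPath (M_i ∩ M_j) a b :=
        fun a ha b hb => vpath_mono Set.inter_subset_left (hC.2.2.1 a ha b hb)
      have hDp : ∀ a ∈ D, ∀ b ∈ D, H1.VPath (M_i ∩ M_j) a b :=
        fun a ha b hb => vpath_mono Set.inter_subset_right (hDconn a ha b hb)
      rcases hX with hX | hX <;> rcases hY with hY | hY
      · exact hCi X hX Y hY
      · exact ((hCi X hX y hyC).tail (adj_symm' _ hadjxy)).trans (hDp x hxD Y hY)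
      · exact ((hDp X hX x hxD).tail hadjxy).trans (hCi y hyC Y hY)
      · exact hDp X hX Y hY
    exact hxC (hmono D hEC hxD)
end

section
/- If a pair of hypergraphs (H1,H2) with H1 ≤ H2 has a tree projection, then there is a winning strategy for the Captain in the Robber and Captain game R&C(H1,H2). -/
/-! ### Auxiliary machinery for the proof -/

namespace TPAux

open SimpleGraph

section Tree

variable {V : Type*} {G : SimpleGraph V} [DecidableEq V]

/-- All vertices on any path between two members of `S` stay in `S`. -/
def Closed (G : SimpleGraph V) (S : Set V) : Prop :=
  ∀ a ∈ S, ∀ b ∈ S, ∀ p : G.Walk a b, p.IsPath → ∀ x ∈ p.support, x ∈ S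

/-- The unique path between two vertices of a tree. -/
noncomputable def thePath (hG : G.IsTree) (a b : V) : G.Walk a b :=
  (hG.existsUnique_path a b).choose

omit [DecidableEq V] in
lemma thePath_isPath (hG : G.IsTree) (a b : V) : (thePath hG a b).IsPath :=
  (hG.existsUnique_path a b).choose_spec.1

omit [DecidableEq V] in
lemma eq_thePath (hG : G.IsTree) {a b : V} (p : G.Walk a b) (hp : p.IsPath) :
    p = thePath hG a b :=
  (hG.existsUnique_path a b).choose_spec.2 p hp

lemma thePath_support_subset (hG : G.IsTree) {a b : V} (w : G.Walk a b) :
    (thePath hG a b).support ⊆ w.support := by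
  have h := eq_thePath hG w.bypass w.bypass_isPath
  rw [← h]
  exact w.support_bypass_subset

omit [DecidableEq V] in
lemma closed_of_thePath (hG : G.IsTree) {S : Set V}
    (h : ∀ a ∈ S, ∀ b ∈ S, ∀ x ∈ (thePath hG a b).support, x ∈ S) :
    Closed G S := by
  intro a ha b hb p hp x hx
  exact h a ha b hb x ((eq_thePath hG p hp) ▸ hx)

/-- Find the first vertex on a path satisfying `P`. -/
lemma exists_first {P : V → Prop} :
    ∀ {a b : V} (w : G.Walk a b), w.IsPath → P b →
    ∃ z, ∃ hz : z ∈ w.support, P z ∧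
      ∀ u ∈ (w.takeUntil z hz).support, P u → u = z := by
  intro a b w
  induction w with
  | nil =>
    intro _ hb
    refine ⟨_, Walk.start_mem_support _, hb, fun u hu _ => ?_⟩
    have := Walk.support_takeUntil_subset _ _ hu
    simpa using this
  | @cons a c b h w' ih =>
    intro hw hb
    by_cases hPa : P a
    · refine ⟨a, Walk.start_mem_support _, hPa, fun u hu _ => ?_⟩
      have hP : ((Walk.cons h w').takeUntil a (Walk.start_mem_support _)).IsPath :=
        hw.takeUntil _
      rw [Walk.isPath_iff_eq_nil.1 hP] at hu
      simpa using hu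
    · obtain ⟨z, hz', hPz, hmin⟩ := ih hw.of_cons hb
      have hza : a ≠ z := fun hh => hPa (hh ▸ hPz)
      have hz : z ∈ (Walk.cons h w').support := by
        rw [Walk.support_cons]; exact List.mem_cons_of_mem _ hz'
      refine ⟨z, hz, hPz, fun u hu hPu => ?_⟩
      have heq : (Walk.cons h w').takeUntil z hz = Walk.cons h (w'.takeUntil z hz') := by
        rw [Walk.takeUntil]
        simp [hza]
      rw [heq, Walk.support_cons, List.mem_cons] at hu
      rcases hu with hu | hu
      · exact absurd (hu ▸ hPu) hPa
      · exact hmin u hu hPu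

/-- Appending two paths overlapping only in the middle vertex gives a path. -/
lemma isPath_append {a z b : V} {t : G.Walk a z} {d : G.Walk z b}
    (ht : t.IsPath) (hd : d.IsPath)
    (hdisj : ∀ u, u ∈ t.support → u ∈ d.support → u = z) :
    (t.append d).IsPath := by
  rw [Walk.isPath_def, Walk.support_append]
  apply List.Nodup.append ht.support_nodup (hd.support_nodup.tail)
  intro u hut hud
  have hud' : u ∈ d.support := by
    rw [Walk.support_eq_cons d]
    exact List.mem_cons_of_mem _ hud
  have hzz := hdisj u hut hud'
  rw [hzz] at hud
  have hcons : d.support = z :: d.support.tail := Walk.support_eq_cons d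
  have hnd := hd.support_nodup
  rw [hcons] at hnd
  exact (List.nodup_cons.1 hnd).1 hud

/-- The median of three paths forming a "triangle" in a tree. -/
lemma median (hG : G.IsTree) {g a b : V}
    (p : G.Walk g a) (hp : p.IsPath) (q : G.Walk g b) (hq : q.IsPath)
    (r : G.Walk a b) (hr : r.IsPath) :
    ∃ z, z ∈ p.support ∧ z ∈ q.support ∧ z ∈ r.support := by
  have hgq : g ∈ q.support := Walk.start_mem_support _
  obtain ⟨z, hz, hzq, hmin⟩ :=
    exists_first (P := fun u => u ∈ q.support) p.reverse hp.reverse hgq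
  set t := p.reverse.takeUntil z hz with ht
  have htp : t.IsPath := hp.reverse.takeUntil _
  set d := q.dropUntil z hzq with hd
  have hdp : d.IsPath := hq.dropUntil _
  have hdisj : ∀ u, u ∈ t.support → u ∈ d.support → u = z := by
    intro u hut hud
    exact hmin u hut (q.support_dropUntil_subset hzq hud)
  have hω : (t.append d).IsPath := isPath_append htp hdp hdisj
  have heq : t.append d = r := ((hG.existsUnique_path a b).choose_spec.2 _ hω).trans
    ((hG.existsUnique_path a b).choose_spec.2 _ hr).symm
  refine ⟨z, ?_, hzq, ?_⟩
  · have : z ∈ p.reverse.support := hz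
    rwa [Walk.support_reverse, List.mem_reverse] at this
  · rw [← heq, Walk.mem_support_append_iff]
    exact Or.inl (Walk.end_mem_support _)

/-- The gate: given a path-closed set `S` and a vertex `g`, there is a vertex of `S`
lying in every path-closed set containing `g` and meeting `S`. -/
lemma gate (hG : G.IsTree) {S : Set V} (hS : Closed G S) {v₀ : V} (hv₀ : v₀ ∈ S) (g : V) :
    ∃ e0 ∈ S, ∀ W : Set V, Closed G W → g ∈ W → (∃ v ∈ W, v ∈ S) → e0 ∈ W := by
  obtain ⟨π₀, hπ₀⟩ : ∃ p : G.Walk g v₀, p.IsPath :=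
    ⟨(hG.existsUnique_path g v₀).choose, (hG.existsUnique_path g v₀).choose_spec.1⟩
  obtain ⟨e0, he0, he0S, hmin⟩ := exists_first (P := fun u => u ∈ S) π₀ hπ₀ hv₀
  refine ⟨e0, he0S, ?_⟩
  rintro W hW hgW ⟨v, hvW, hvS⟩
  set π := (hG.existsUnique_path g v).choose with hπdef
  have hπ : π.IsPath := (hG.existsUnique_path g v).choose_spec.1
  set ρ := (hG.existsUnique_path v v₀).choose with hρdef
  have hρ : ρ.IsPath := (hG.existsUnique_path v v₀).choose_spec.1
  obtain ⟨m, hmπ, hmπ₀, hmρ⟩ := median hG π hπ π₀ hπ₀ ρ hρ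
  have hmS : m ∈ S := hS v hvS v₀ hv₀ ρ hρ m hmρ
  have hmW : m ∈ W := hW g hgW v hvW π hπ m hmπ
  rw [← π₀.take_spec he0, Walk.mem_support_append_iff] at hmπ₀
  rcases hmπ₀ with hm1 | hm2
  · have : m = e0 := hmin m hm1 hmS
    rwa [← this]
  · set t := π₀.takeUntil e0 he0 with htdef
    set d := π₀.dropUntil e0 he0 with hddef
    have htp : t.IsPath := hπ₀.takeUntil _
    have hdp : d.IsPath := hπ₀.dropUntil _
    set s := d.takeUntil m hm2 with hsdef
    have hsp : s.IsPath := hdp.takeUntil _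
    have hπ₀nodup : (t.append d).support.Nodup := by
      rw [π₀.take_spec he0]; exact hπ₀.support_nodup
    rw [Walk.support_append] at hπ₀nodup
    have hdisj := List.disjoint_of_nodup_append hπ₀nodup
    have hdisj2 : ∀ u, u ∈ t.support → u ∈ s.support → u = e0 := by
      intro u hut hus
      by_contra hne
      have hus' : u ∈ d.support := d.support_takeUntil_subset hm2 hus
      have hmem : u ∈ d.support.tail := by
        have hc := Walk.support_eq_cons d
        rw [hc] at hus'
        rcases List.mem_cons.1 hus' with h1 | h1
        · exact absurd h1 hne
        · exact h1
      exact hdisj hut hmem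
    have hω : (t.append s).IsPath := isPath_append htp hsp hdisj2
    have hωsupp : ∀ x ∈ (t.append s).support, x ∈ W :=
      fun x hx => hW g hgW m hmW (t.append s) hω x hx
    apply hωsupp
    rw [Walk.mem_support_append_iff]
    exact Or.inl (Walk.end_mem_support _)

end Tree

section Hyper

variable {α : Type*} {H1 : HGraph α}

lemma adj_symm {V : Set α} {x y : α} (h : H1.Adj V x y) : H1.Adj V y x := by
  obtain ⟨e, he, hx, hy, hxV, hyV⟩ := h
  exact ⟨e, he, hy, hx, hyV, hxV⟩

lemma vpath_symm {V : Set α} {x y : α} (h : H1.VPath V x y) : H1.VPath V y x :=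
  by
  haveI : Std.Symm (H1.Adj V) := ⟨fun _ _ hh => adj_symm hh⟩
  exact Std.Symm.symm (r := Relation.ReflTransGen (H1.Adj V)) _ _ h

/-- Anything `[M]`-reachable from a point of an `[M]`-component stays in it. -/
lemma comp_closed {M C : Set α} (hC : H1.IsComponent M C) {x y : α}
    (hx : x ∈ C) (hxy : H1.VPath M x y) : y ∈ C := by
  set D : Set α := {z | ∃ x ∈ C, H1.VPath M x z} with hD
  have hCD : C ⊆ D := fun z hz => ⟨z, hz, Relation.ReflTransGen.refl⟩
  have hDsub : D ⊆ H1.nodes \ M := by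
    rintro z ⟨x', hx', hp⟩
    rcases Relation.ReflTransGen.cases_tail hp with rfl | ⟨c, _, hadj⟩
    · exact hC.2.1 hx'
    · obtain ⟨e, he, _, hze, _, hzM⟩ := hadj
      exact ⟨⟨e, he, hze⟩, hzM⟩
  have hDconn : H1.VConnected M D := by
    rintro z ⟨xz, hxz, hpz⟩ z' ⟨xz', hxz', hpz'⟩
    exact (vpath_symm hpz).trans ((hC.2.2.1 xz hxz xz' hxz').trans hpz')
  have hDC : D = C := hC.2.2.2 D hCD hDsub hDconn
  rw [← hDC]
  exact ⟨x, hx, hxy⟩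

/-- The border of a component is covered by the separator. -/
lemma border_subset {M C : Set α} (hC : H1.IsComponent M C) : H1.border C ⊆ M := by
  rintro x ⟨⟨e, he, hxe, y, hyC, hye⟩, hxC⟩
  by_contra hxM
  have hyM : y ∉ M := (hC.2.1 hyC).2
  exact hxC (comp_closed hC hyC (Relation.ReflTransGen.single ⟨e, he, hye, hxe, hyM, hxM⟩))

lemma subset_fr {C : Set α} (h : C ⊆ H1.nodes) : C ⊆ H1.Fr C := by
  intro x hx
  obtain ⟨e, he, hxe⟩ := h hx
  exact ⟨e, he, hxe, x, hx, hxe⟩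

lemma fr_subset_nodes {C : Set α} : H1.Fr C ⊆ H1.nodes := by
  rintro x ⟨e, he, hxe, _⟩
  exact ⟨e, he, hxe⟩

lemma border_nodes : H1.border H1.nodes = ∅ := by
  ext x
  simp only [Set.mem_empty_iff_false, iff_false]
  rintro ⟨hf, hn⟩
  exact hn (fr_subset_nodes hf)

/-- If the border of `C` is guarded by `K`, then any set `[K]`-connected with
nonempty `C` is inside `C`. -/
lemma escape_subset {C C' K : Set α} (hb : H1.border C ⊆ K) (hCne : C.Nonempty)
    (hconn : H1.VConnected K (C ∪ C')) : C' ⊆ C := by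
  obtain ⟨c, hc⟩ := hCne
  have main : ∀ y, H1.VPath K c y → y ∈ C := by
    intro y hy
    induction hy with
    | refl => exact hc
    | @tail b y' _ hadj ih =>
      obtain ⟨e, he, hbe, hye, _, hyK⟩ := hadj
      by_contra hyC
      exact hyK (hb ⟨⟨e, he, hye, b, ih, hbe⟩, hyC⟩)
  intro z hz
  exact main z (hconn c (Or.inl hc) z (Or.inr hz))

end Hyper

section Join

variable {α : Type*} {H1 Ha : HGraph α}

/-- The hyperedges containing a fixed node form a path-closed set in a join tree. -/
lemma closed_Sw [DecidableEq (Hyperedge Ha)] (JT : JoinTree Ha) (w : α) :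
    Closed JT.T {e : Hyperedge Ha | w ∈ e.1} := by
  apply closed_of_thePath JT.isTree
  intro a ha b hb x hx
  obtain ⟨q'⟩ := JT.node_connected w ⟨a, ha⟩ ⟨b, hb⟩
  let hemb := SimpleGraph.Embedding.induce (G := JT.T) {h : Hyperedge Ha | w ∈ h.1}
  let q : JT.T.Walk a b := (q'.map hemb.toHom).copy rfl rfl
  have hsup : ∀ u ∈ q.support, w ∈ u.1 := by
    intro u hu
    change u ∈ ((q'.map hemb.toHom).copy rfl rfl).support at hu
    rw [SimpleGraph.Walk.support_copy, SimpleGraph.Walk.support_map, List.mem_map] at hu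
    obtain ⟨⟨u', hu'⟩, _, rfl⟩ := hu
    exact hu'
  exact hsup x (thePath_support_subset JT.isTree q hx)

/-- The hyperedges meeting a component form a path-closed set in a join tree. -/
lemma closed_comp [DecidableEq (Hyperedge Ha)] (JT : JoinTree Ha) (hle1 : H1.HLe Ha)
    {M C : Set α} (hC : H1.IsComponent M C) :
    Closed JT.T {e : Hyperedge Ha | ∃ x ∈ C, x ∈ e.1} := by
  apply closed_of_thePath JT.isTree
  rintro a ⟨x, hxC, hxa⟩ b ⟨y, hyC, hyb⟩ u hu
  have R : ∀ y', H1.VPath M x y' → y' ∈ C → ∀ f : Hyperedge Ha, y' ∈ f.1 →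
      ∀ u ∈ (thePath JT.isTree a f).support, ∃ t ∈ C, t ∈ u.1 := by
    intro y' hp
    induction hp with
    | refl =>
      intro _ f hxf u hu
      have := closed_Sw JT x a hxa f hxf (thePath JT.isTree a f)
        (thePath_isPath JT.isTree a f) u hu
      exact ⟨x, hxC, this⟩
    | @tail c y'' hxc hadj ih =>
      intro hy''C f hy''f u hu
      obtain ⟨e, he, hce, hye, hcM, hyM⟩ := hadj
      have hcC : c ∈ C := comp_closed hC hxC hxc
      obtain ⟨E, hE, heE⟩ := hle1 e he
      have hcomb : u ∈ (thePath JT.isTree a ⟨E, hE⟩).support ∨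
          u ∈ (thePath JT.isTree ⟨E, hE⟩ f).support := by
        have hsub := thePath_support_subset JT.isTree
          ((thePath JT.isTree a ⟨E, hE⟩).append (thePath JT.isTree ⟨E, hE⟩ f))
        have := hsub hu
        rwa [SimpleGraph.Walk.mem_support_append_iff] at this
      rcases hcomb with hu1 | hu2
      · exact ih hcC ⟨E, hE⟩ (heE hce) u hu1
      · have := closed_Sw JT y'' ⟨E, hE⟩ (heE hye) f hy''f _
          (thePath_isPath JT.isTree _ f) u hu2
        exact ⟨y'', hy''C, this⟩
  exact R y (hC.2.2.1 x hxC y hyC) hyC b hyb u hu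

/-- Key covering lemma: if the border of a component is inside a single hyperedge
of an acyclic hypergraph `Ha ≥ H1`, then some hyperedge of `Ha` covers the whole
border and meets the component. -/
lemma exists_cover (JT : JoinTree Ha) (hle1 : H1.HLe Ha)
    {M C : Set α} (hC : H1.IsComponent M C) {g : Hyperedge Ha}
    (hg : H1.border C ⊆ (g.1 : Set α)) :
    ∃ E ∈ Ha.edges, H1.border C ⊆ (E : Set α) ∧ ∃ x ∈ C, x ∈ E := by
  classical
  obtain ⟨x₀, hx₀⟩ := hC.1
  obtain ⟨h1e, hh1, hx0h⟩ := (hC.2.1 hx₀).1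
  obtain ⟨E0, hE0, hsub⟩ := hle1 h1e hh1
  set S' : Set (Hyperedge Ha) := {e | ∃ x ∈ C, x ∈ e.1} with hS'def
  have hv₀ : (⟨E0, hE0⟩ : Hyperedge Ha) ∈ S' := ⟨x₀, hx₀, hsub hx0h⟩
  have hS' : Closed JT.T S' := closed_comp JT hle1 hC
  obtain ⟨e0, he0S, hgate⟩ := gate JT.isTree hS' hv₀ g
  refine ⟨e0.1, e0.2, ?_, he0S⟩
  intro w hw
  obtain ⟨e, he, hwe, y, hyC, hye⟩ := hw.1
  obtain ⟨E, hE, heE⟩ := hle1 e he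
  exact hgate {f : Hyperedge Ha | w ∈ f.1} (closed_Sw JT w) (hg hw)
    ⟨⟨E, hE⟩, heE hwe, y, hyC, heE hye⟩

end Join

end TPAux


theorem tp_implies_winning_strategy {α : Type*} (H1 H2 : HGraph α)
    (hle : H1.HLe H2)
    (htp : ∃ Ha : HGraph α, IsTreeProjection H1 H2 Ha) :
    ∃ σ : Set α → Set α → Set α, IsStrategy H1 H2 σ ∧ Winning H1 σ := by
  classical
  obtain ⟨Ha, hAc, hle1, hle2⟩ := htp
  obtain ⟨JT⟩ := hAc
  set Cnd : Set α → Prop :=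
    fun C => ∃ E ∈ Ha.edges, H1.border C ⊆ (E : Set α) ∧ ∃ x ∈ C, x ∈ E with hCnd
  set σ : Set α → Set α → Set α := fun _ C =>
    if hc : Cnd C then ((hc.choose : Finset α) : Set α) ∩ H1.Fr C else ∅ with hσ
  have hσ_pos : ∀ M C, ∀ hc : Cnd C, σ M C = ((hc.choose : Finset α) : Set α) ∩ H1.Fr C := by
    intro M C hc
    simp only [hσ, dif_pos hc]
  have hσ_neg : ∀ M C, ¬ Cnd C → σ M C = ∅ := by
    intro M C hc
    simp only [hσ, dif_neg hc]
  refine ⟨σ, ?_, ?_⟩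
  · -- IsStrategy
    intro M C hconf hCne
    have hnodes : ∃ x, x ∈ H1.nodes := by
      rcases hconf.2 with hcomp | h0 | ⟨_, hCn⟩
      · obtain ⟨x, hx⟩ := hcomp.1
        exact ⟨x, (hcomp.2.1 hx).1⟩
      · exact absurd h0 hCne
      · obtain ⟨x, hx⟩ := Set.nonempty_iff_ne_empty.2 (hCn ▸ hCne)
        exact ⟨x, hx⟩
    obtain ⟨x, hx⟩ := hnodes
    obtain ⟨h1e, hh1, hxh⟩ := hx
    obtain ⟨h2e, hh2, hsub12⟩ := hle h1e hh1
    by_cases hc : Cnd C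
    · rw [hσ_pos M C hc]
      obtain ⟨hcE, _, _⟩ := hc.choose_spec
      obtain ⟨h2', hh2', hsubE⟩ := hle2 _ hcE
      refine ⟨⟨h2', hh2', fun y hy => ?_⟩, Set.inter_subset_right⟩
      exact hsubE hy.1
    · rw [hσ_neg M C hc]
      exact ⟨⟨h2e, hh2, Set.empty_subset _⟩, Set.empty_subset _⟩
  · -- Winning
    rintro ⟨f, hf0, hstep⟩
    set M : ℕ → Set α := fun n => (f n).1 with hM
    set C : ℕ → Set α := fun n => (f n).2 with hC
    have hM0 : M 0 = ∅ := by simp only [hM]; rw [hf0]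
    have hC0 : C 0 = H1.nodes := by simp only [hC]; rw [hf0]
    have hCne : ∀ n, C n ≠ ∅ := fun n => (hstep n).1
    have hMs : ∀ n, M (n + 1) = σ (M n) (C n) := fun n => (hstep n).2.1
    have hesc : ∀ n, EscapeComp H1 (M n) (C n) (M (n + 1)) (C (n + 1)) := by
      intro n
      rcases (hstep n).2.2 with h | ⟨_, hC1⟩
      · exact h
      · exact absurd hC1 (hCne (n + 1))
    have hcomp : ∀ n, H1.IsComponent (M (n + 1)) (C (n + 1)) := fun n => (hesc n).1
    have hnodes_ne : H1.nodes.Nonempty := by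
      rw [← hC0]; exact Set.nonempty_iff_ne_empty.2 (hCne 0)
    obtain ⟨x₀, hx₀⟩ := hnodes_ne
    obtain ⟨h1e, hh1, hx0h⟩ := hx₀
    obtain ⟨E0, hE0, hsubE0⟩ := hle1 h1e hh1
    have hsubnodes : ∀ n, C n ⊆ H1.nodes := by
      intro n
      match n with
      | 0 => rw [hC0]
      | n + 1 => exact fun x hx => ((hcomp n).2.1 hx).1
    have hborderM : ∀ n, H1.border (C n) ⊆ M n := by
      intro n
      match n with
      | 0 =>
        rw [hC0, TPAux.border_nodes]
        exact Set.empty_subset _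
      | n + 1 => exact TPAux.border_subset (hcomp n)
    have hcnd : ∀ n, Cnd (C n) := by
      intro n
      match n with
      | 0 =>
        refine ⟨E0, hE0, ?_, x₀, ?_, hsubE0 hx0h⟩
        · rw [hC0, TPAux.border_nodes]
          exact Set.empty_subset _
        · rw [hC0]; exact ⟨h1e, hh1, hx0h⟩
      | n + 1 =>
        have hb : H1.border (C (n + 1)) ⊆ M (n + 1) := TPAux.border_subset (hcomp n)
        have hg : ∃ g : Hyperedge Ha, H1.border (C (n + 1)) ⊆ (g.1 : Set α) := by
          rw [hMs n] at hb
          by_cases hc : Cnd (C n)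
          · rw [hσ_pos (M n) (C n) hc] at hb
            exact ⟨⟨hc.choose, hc.choose_spec.1⟩, fun w hw => (hb hw).1⟩
          · rw [hσ_neg (M n) (C n) hc] at hb
            exact ⟨⟨E0, hE0⟩, fun w hw => absurd (hb hw) (Set.notMem_empty w)⟩
        obtain ⟨g, hg⟩ := hg
        exact TPAux.exists_cover JT hle1 (hcomp n) hg
    have hMeq : ∀ n, M (n + 1) = (((hcnd n).choose : Finset α) : Set α) ∩ H1.Fr (C n) := by
      intro n
      rw [hMs n, hσ_pos (M n) (C n) (hcnd n)]
    have hdec : ∀ n, C (n + 1) ⊆ C n ∧ ∃ t, t ∈ C n ∧ t ∉ C (n + 1) := by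
      intro n
      have hbM' : H1.border (C n) ⊆ M n ∩ M (n + 1) := by
        refine Set.subset_inter (hborderM n) ?_
        rw [hMeq n]
        exact Set.subset_inter (hcnd n).choose_spec.2.1 (fun w hw => hw.1)
      have hCn_ne : (C n).Nonempty := Set.nonempty_iff_ne_empty.2 (hCne n)
      have hsub : C (n + 1) ⊆ C n := TPAux.escape_subset hbM' hCn_ne (hesc n).2
      refine ⟨hsub, ?_⟩
      obtain ⟨t, htC, htE⟩ := (hcnd n).choose_spec.2.2
      refine ⟨t, htC, fun htC1 => ?_⟩
      have htM : t ∈ M (n + 1) := by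
        rw [hMeq n]
        exact ⟨htE, TPAux.subset_fr (hsubnodes n) htC⟩
      exact ((hcomp n).2.1 htC1).2 htM
    set N₀ : Finset α := H1.edges.sup id with hN₀
    have hmemN : ∀ x ∈ H1.nodes, x ∈ N₀ := by
      rintro x ⟨h, hh, hxh⟩
      rw [hN₀]
      exact Finset.mem_sup.2 ⟨h, hh, hxh⟩
    set D : ℕ → Finset α := fun n => N₀.filter (· ∈ C n) with hD
    have hDcard : ∀ n, (D (n + 1)).card < (D n).card := by
      intro n
      apply Finset.card_lt_card
      obtain ⟨hsub, t, htC, htn⟩ := hdec n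
      constructor
      · intro x hx
        rw [hD, Finset.mem_filter] at hx ⊢
        exact ⟨hx.1, hsub hx.2⟩
      · intro hcon
        have htD : t ∈ D n := by
          rw [hD, Finset.mem_filter]
          exact ⟨hmemN t (hsubnodes n htC), htC⟩
        have := hcon htD
        rw [hD, Finset.mem_filter] at this
        exact htn this.2
    have hbound : ∀ n, (D n).card + n ≤ (D 0).card := by
      intro n
      induction n with
      | zero => simp
      | succ n ih =>
        have := hDcard n
        omega
    have := hbound ((D 0).card + 1)
    omega
end
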